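/- Let B > 0, let ε ∈ {−1,+1}, and let ρ > 0 satisfy cos ρ ≠ 0 and e^{ρ} = −(1 + ε·sin ρ)/cos ρ. Define a₁ = (1/√B)·ε/(e^{ρ}+ε), a₂ = (1/√B)·1/(1+ε·e^{−ρ}), a₃ = −1/√B, a₄ = (1/√B)·(1−ε·e^{−ρ})/(1+ε·e^{−ρ}), and set φ(ξ) = a₁e^{ρξ/B} + a₂e^{−ρξ/B} + a₃cos(ρξ/B) + a₄sin(ρξ/B) and ψ(ξ) = a₁e^{ρξ/B} + a₂e^{−ρξ/B} − a₃cos(ρξ/B) − a₄sin(ρξ/B). Then for every ξ ∈ [0,B], ∫₀^B max(ξ−x,0)·ψ(x) dx = (B/ρ)²·φ(ξ); consequently φ is an eigenvector of γ*γ with eigenvalue (B/ρ)⁴: ∫₀^B max(ξ−u,0)·( ∫₀^B max(x−u,0)·φ(x) dx ) du = (B/ρ)⁴·φ(ξ) for all ξ ∈ [0,B]. -/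

import Mathlib

open Real MeasureTheory Set

lemma weightL (t a b : ℝ) (f g G : ℝ → ℝ) (hf : Continuous f)
    (hg : ∀ x, HasDerivAt g (f x) x) (hG : ∀ x, HasDerivAt G (g x) x) :
    (∫ x in a..b, (t - x) * f x)
      = ((t - b) * g b + G b) - ((t - a) * g a + G a) := by
  apply intervalIntegral.integral_eq_sub_of_hasDerivAt
  · intro x hx
    have h1 : HasDerivAt (fun y => (t - y) * g y) ((-1) * g x + (t - x) * f x) x :=
      ((hasDerivAt_id x).const_sub t).mul (hg x)
    have h2 := h1.add (hG x)
    convert h2 using 1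
    · rfl
    · ring
  · exact ((continuous_const.sub continuous_id).mul hf).intervalIntegrable _ _

lemma hDexp (c x : ℝ) : HasDerivAt (fun y => Real.exp (c*y)) (c * Real.exp (c*x)) x := by
  simpa [mul_comm] using (HasDerivAt.exp ((hasDerivAt_id x).const_mul c))

lemma hDexpneg (c x : ℝ) : HasDerivAt (fun y => Real.exp (-(c*y))) (-c * Real.exp (-(c*x))) x := by
  simpa [mul_comm] using (HasDerivAt.exp (((hasDerivAt_id x).const_mul c).neg))

lemma hDcos (c x : ℝ) : HasDerivAt (fun y => Real.cos (c*y)) (-c * Real.sin (c*x)) x := by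
  simpa [mul_comm] using (HasDerivAt.cos ((hasDerivAt_id x).const_mul c))

lemma hDsin (c x : ℝ) : HasDerivAt (fun y => Real.sin (c*y)) (c * Real.cos (c*x)) x := by
  simpa [mul_comm] using (HasDerivAt.sin ((hasDerivAt_id x).const_mul c))

lemma int_combL (c : ℝ) (hc : c ≠ 0) (p q r s t a b : ℝ) :
    (∫ x in a..b, (t - x) * (p * Real.exp (c*x) + q * Real.exp (-(c*x))
        + r * Real.cos (c*x) + s * Real.sin (c*x)))
      = ((t - b) * ((p/c) * Real.exp (c*b) + (-q/c) * Real.exp (-(c*b))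
            + (r/c) * Real.sin (c*b) + (-s/c) * Real.cos (c*b))
          + ((p/c^2) * Real.exp (c*b) + (q/c^2) * Real.exp (-(c*b))
            + (-r/c^2) * Real.cos (c*b) + (-s/c^2) * Real.sin (c*b)))
        - ((t - a) * ((p/c) * Real.exp (c*a) + (-q/c) * Real.exp (-(c*a))
            + (r/c) * Real.sin (c*a) + (-s/c) * Real.cos (c*a))
          + ((p/c^2) * Real.exp (c*a) + (q/c^2) * Real.exp (-(c*a))
            + (-r/c^2) * Real.cos (c*a) + (-s/c^2) * Real.sin (c*a))) := by
  apply weightL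
  · fun_prop
  · intro x
    have h := (((((hDexp c x).const_mul (p/c)).add ((hDexpneg c x).const_mul (-q/c))).add
        ((hDsin c x).const_mul (r/c))).add ((hDcos c x).const_mul (-s/c)))
    refine h.congr_deriv ?_
    field_simp
  · intro x
    have h := (((((hDexp c x).const_mul (p/c^2)).add ((hDexpneg c x).const_mul (q/c^2))).add
        ((hDcos c x).const_mul (-r/c^2))).add ((hDsin c x).const_mul (-s/c^2)))
    refine h.congr_deriv ?_
    field_simp

lemma int_combR (c : ℝ) (hc : c ≠ 0) (p q r s t a b : ℝ) :
    (∫ x in a..b, (x - t) * (p * Real.exp (c*x) + q * Real.exp (-(c*x))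
        + r * Real.cos (c*x) + s * Real.sin (c*x)))
      = -(((t - b) * ((p/c) * Real.exp (c*b) + (-q/c) * Real.exp (-(c*b))
            + (r/c) * Real.sin (c*b) + (-s/c) * Real.cos (c*b))
          + ((p/c^2) * Real.exp (c*b) + (q/c^2) * Real.exp (-(c*b))
            + (-r/c^2) * Real.cos (c*b) + (-s/c^2) * Real.sin (c*b)))
        - ((t - a) * ((p/c) * Real.exp (c*a) + (-q/c) * Real.exp (-(c*a))
            + (r/c) * Real.sin (c*a) + (-s/c) * Real.cos (c*a))
          + ((p/c^2) * Real.exp (c*a) + (q/c^2) * Real.exp (-(c*a))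
            + (-r/c^2) * Real.cos (c*a) + (-s/c^2) * Real.sin (c*a)))) := by
  have h0 : (∫ x in a..b, (x - t) * (p * Real.exp (c*x) + q * Real.exp (-(c*x))
        + r * Real.cos (c*x) + s * Real.sin (c*x)))
      = ∫ x in a..b, -((t - x) * (p * Real.exp (c*x) + q * Real.exp (-(c*x))
        + r * Real.cos (c*x) + s * Real.sin (c*x))) := by
    apply intervalIntegral.integral_congr
    intro x _
    ring
  rw [h0, intervalIntegral.integral_neg, int_combL c hc]

theorem stmt_18 (B : ℝ) (hB : 0 < B) (ε : ℝ) (hε : ε = 1 ∨ ε = -1)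
    (ρ : ℝ) (hρ : 0 < ρ) (hcos : cos ρ ≠ 0)
    (hfix : exp ρ = -(1 + ε * sin ρ) / cos ρ)
    (a₁ a₂ a₃ a₄ : ℝ)
    (ha₁ : a₁ = (1 / Real.sqrt B) * (ε / (exp ρ + ε)))
    (ha₂ : a₂ = (1 / Real.sqrt B) * (1 / (1 + ε * exp (-ρ))))
    (ha₃ : a₃ = -(1 / Real.sqrt B))
    (ha₄ : a₄ = (1 / Real.sqrt B) * ((1 - ε * exp (-ρ)) / (1 + ε * exp (-ρ))))
    (φ ψ : ℝ → ℝ)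
    (hφ : ∀ ξ, φ ξ = a₁ * exp (ρ * ξ / B) + a₂ * exp (-(ρ * ξ / B))
        + a₃ * cos (ρ * ξ / B) + a₄ * sin (ρ * ξ / B))
    (hψ : ∀ ξ, ψ ξ = a₁ * exp (ρ * ξ / B) + a₂ * exp (-(ρ * ξ / B))
        - a₃ * cos (ρ * ξ / B) - a₄ * sin (ρ * ξ / B)) :
    (∀ ξ ∈ Icc (0:ℝ) B,
      (∫ x in (0:ℝ)..B, max (ξ - x) 0 * ψ x) = (B / ρ) ^ 2 * φ ξ) ∧
    (∀ ξ ∈ Icc (0:ℝ) B,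
      (∫ u in (0:ℝ)..B, max (ξ - u) 0 * ∫ x in (0:ℝ)..B, max (x - u) 0 * φ x)
        = (B / ρ) ^ 4 * φ ξ) := by
  have hε2 : ε * ε = 1 := by rcases hε with h | h <;> rw [h] <;> norm_num
  have hEpos : (0:ℝ) < exp ρ := Real.exp_pos ρ
  have hE1 : (1:ℝ) < exp ρ := by
    have := Real.exp_lt_exp.mpr hρ; simpa using this
  have hE0 : exp ρ ≠ 0 := ne_of_gt hEpos
  have hden : exp ρ + ε ≠ 0 := by rcases hε with h | h <;> rw [h] <;> nlinarith
  have hden2 : 1 + ε * (exp ρ)⁻¹ ≠ 0 := by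
    intro h
    apply hden
    have h2 : (1 + ε * (exp ρ)⁻¹) * exp ρ = 0 := by rw [h]; ring
    have h3 : exp ρ + ε = 0 := by
      field_simp at h2
      linarith
    exact h3
  -- closed forms
  have hA2 : a₂ = (1 / Real.sqrt B) * (exp ρ / (exp ρ + ε)) := by
    rw [ha₂, Real.exp_neg]
    congr 1
    rw [div_eq_div_iff (by exact hden2) hden]
    field_simp
  have hA4 : a₄ = (1 / Real.sqrt B) * ((exp ρ - ε) / (exp ρ + ε)) := by
    rw [ha₄, Real.exp_neg]
    congr 1
    rw [div_eq_div_iff (by exact hden2) hden]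
    field_simp
    try ring
  -- basic coefficient identities
  have h5 : a₁ + a₂ + a₃ = 0 := by
    rw [ha₁, hA2, ha₃]
    field_simp
    try ring
  have h6 : a₁ - a₂ + a₄ = 0 := by
    rw [ha₁, hA2, hA4]
    field_simp
    try ring
  -- boundary identities
  have hP : exp ρ * cos ρ = -(1 + ε * sin ρ) := by
    rw [hfix]; field_simp
  have hQ : sin ρ ^ 2 + cos ρ ^ 2 = 1 := sin_sq_add_cos_sq ρ
  have hKc : ((ε * exp ρ + 1) + (exp ρ + ε) * cos ρ - (exp ρ - ε) * sin ρ) * cos ρ = 0 := by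
    linear_combination (ε + cos ρ - sin ρ) * hP + ε * hQ - sin ρ * hε2
  have hLc : ((ε * exp ρ - 1) - (exp ρ + ε) * sin ρ - (exp ρ - ε) * cos ρ) * cos ρ = 0 := by
    linear_combination (ε - sin ρ - cos ρ) * hP + ε * hQ - sin ρ * hε2
  have hK0 : (ε * exp ρ + 1) + (exp ρ + ε) * cos ρ - (exp ρ - ε) * sin ρ = 0 := by
    rcases mul_eq_zero.mp hKc with h | h
    · exact h
    · exact absurd h hcos
  have hL0 : (ε * exp ρ - 1) - (exp ρ + ε) * sin ρ - (exp ρ - ε) * cos ρ = 0 := by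
    rcases mul_eq_zero.mp hLc with h | h
    · exact h
    · exact absurd h hcos
  have h7 : a₁ * exp ρ + a₂ * exp (-ρ) - a₃ * cos ρ - a₄ * sin ρ = 0 := by
    have heq : a₁ * exp ρ + a₂ * exp (-ρ) - a₃ * cos ρ - a₄ * sin ρ
        = (1 / Real.sqrt B) / (exp ρ + ε)
          * ((ε * exp ρ + 1) + (exp ρ + ε) * cos ρ - (exp ρ - ε) * sin ρ) := by
      rw [ha₁, hA2, ha₃, hA4, Real.exp_neg]
      field_simp
      ring
    rw [heq, hK0, mul_zero]
  have h8 : a₁ * exp ρ - a₂ * exp (-ρ) + a₃ * sin ρ - a₄ * cos ρ = 0 := by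
    have heq : a₁ * exp ρ - a₂ * exp (-ρ) + a₃ * sin ρ - a₄ * cos ρ
        = (1 / Real.sqrt B) / (exp ρ + ε)
          * ((ε * exp ρ - 1) - (exp ρ + ε) * sin ρ - (exp ρ - ε) * cos ρ) := by
      rw [ha₁, hA2, ha₃, hA4, Real.exp_neg]
      field_simp
      ring
    rw [heq, hL0, mul_zero]
  -- setup c
  set c : ℝ := ρ / B with hc_def
  have hc : c ≠ 0 := div_ne_zero (ne_of_gt hρ) (ne_of_gt hB)
  have harg : ∀ x : ℝ, ρ * x / B = c * x := fun x => by rw [hc_def]; ring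
  have hBρ : B / ρ = 1 / c := by rw [hc_def, one_div_div]
  have hcB : c * B = ρ := by rw [hc_def]; field_simp
  have hcontφ : Continuous φ := by
    have : φ = fun ξ => a₁ * exp (ρ * ξ / B) + a₂ * exp (-(ρ * ξ / B))
        + a₃ * cos (ρ * ξ / B) + a₄ * sin (ρ * ξ / B) := funext hφ
    rw [this]; fun_prop
  have hcontψ : Continuous ψ := by
    have : ψ = fun ξ => a₁ * exp (ρ * ξ / B) + a₂ * exp (-(ρ * ξ / B))
        - a₃ * cos (ρ * ξ / B) - a₄ * sin (ρ * ξ / B) := funext hψ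
    rw [this]; fun_prop
  -- PART 1
  have part1 : ∀ ξ ∈ Icc (0:ℝ) B,
      (∫ x in (0:ℝ)..B, max (ξ - x) 0 * ψ x) = (B / ρ) ^ 2 * φ ξ := by
    intro ξ hξ
    obtain ⟨hξ0, hξB⟩ := hξ
    have hint1 : IntervalIntegrable (fun x => max (ξ - x) 0 * ψ x) volume 0 ξ :=
      (((continuous_const.sub continuous_id).max continuous_const).mul hcontψ).intervalIntegrable _ _
    have hint2 : IntervalIntegrable (fun x => max (ξ - x) 0 * ψ x) volume ξ B :=
      (((continuous_const.sub continuous_id).max continuous_const).mul hcontψ).intervalIntegrable _ _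
    have hsplit : (∫ x in (0:ℝ)..B, max (ξ - x) 0 * ψ x)
        = (∫ x in (0:ℝ)..ξ, max (ξ - x) 0 * ψ x) + ∫ x in ξ..B, max (ξ - x) 0 * ψ x :=
      (intervalIntegral.integral_add_adjacent_intervals hint1 hint2).symm
    have hzero : (∫ x in ξ..B, max (ξ - x) 0 * ψ x) = 0 := by
      have heq : EqOn (fun x => max (ξ - x) 0 * ψ x) (fun _ => (0:ℝ)) (uIcc ξ B) := by
        intro x hx
        rw [uIcc_of_le hξB] at hx
        have : ξ - x ≤ 0 := by linarith [hx.1]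
        simp [max_eq_right this]
      rw [intervalIntegral.integral_congr heq]
      simp
    have hmain : (∫ x in (0:ℝ)..ξ, max (ξ - x) 0 * ψ x)
        = ∫ x in (0:ℝ)..ξ, (ξ - x) * (a₁ * Real.exp (c*x) + a₂ * Real.exp (-(c*x))
            + (-a₃) * Real.cos (c*x) + (-a₄) * Real.sin (c*x)) := by
      apply intervalIntegral.integral_congr
      intro x hx
      rw [uIcc_of_le hξ0] at hx
      have : (0:ℝ) ≤ ξ - x := by linarith [hx.2]
      simp only [hψ x, harg, max_eq_left this]
      ring
    rw [hsplit, hzero, add_zero, hmain, int_combL c hc, hφ ξ]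
    simp only [harg, mul_zero, Real.exp_zero, Real.cos_zero, Real.sin_zero, neg_zero, sub_zero, sub_self]
    rw [hBρ]
    linear_combination (-(ξ / c)) * h6 + (-(1 / c^2)) * h5
  refine ⟨part1, ?_⟩
  -- inner integral for part 2
  have inner : ∀ u ∈ Icc (0:ℝ) B,
      (∫ x in (0:ℝ)..B, max (x - u) 0 * φ x) = (B / ρ) ^ 2 * ψ u := by
    intro u hu
    obtain ⟨hu0, huB⟩ := hu
    have hint1 : IntervalIntegrable (fun x => max (x - u) 0 * φ x) volume 0 u :=
      (((continuous_id.sub continuous_const).max continuous_const).mul hcontφ).intervalIntegrable _ _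
    have hint2 : IntervalIntegrable (fun x => max (x - u) 0 * φ x) volume u B :=
      (((continuous_id.sub continuous_const).max continuous_const).mul hcontφ).intervalIntegrable _ _
    have hsplit : (∫ x in (0:ℝ)..B, max (x - u) 0 * φ x)
        = (∫ x in (0:ℝ)..u, max (x - u) 0 * φ x) + ∫ x in u..B, max (x - u) 0 * φ x :=
      (intervalIntegral.integral_add_adjacent_intervals hint1 hint2).symm
    have hzero : (∫ x in (0:ℝ)..u, max (x - u) 0 * φ x) = 0 := by
      have heq : EqOn (fun x => max (x - u) 0 * φ x) (fun _ => (0:ℝ)) (uIcc 0 u) := by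
        intro x hx
        rw [uIcc_of_le hu0] at hx
        have : x - u ≤ 0 := by linarith [hx.2]
        simp [max_eq_right this]
      rw [intervalIntegral.integral_congr heq]
      simp
    have hmain : (∫ x in u..B, max (x - u) 0 * φ x)
        = ∫ x in u..B, (x - u) * (a₁ * Real.exp (c*x) + a₂ * Real.exp (-(c*x))
            + a₃ * Real.cos (c*x) + a₄ * Real.sin (c*x)) := by
      apply intervalIntegral.integral_congr
      intro x hx
      rw [uIcc_of_le huB] at hx
      have : (0:ℝ) ≤ x - u := by linarith [hx.1]
      simp only [hφ x, harg, max_eq_left this]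
      try ring
    rw [hsplit, hzero, zero_add, hmain, int_combR c hc, hψ u]
    simp only [harg, hcB, sub_self]
    rw [hBρ]
    linear_combination ((B - u) / c) * h8 + (-(1 / c^2)) * h7
  -- PART 2
  intro ξ hξ
  have heq : EqOn (fun u => max (ξ - u) 0 * ∫ x in (0:ℝ)..B, max (x - u) 0 * φ x)
      (fun u => (B / ρ) ^ 2 * (max (ξ - u) 0 * ψ u)) (uIcc 0 B) := by
    intro u hu
    rw [uIcc_of_le hB.le] at hu
    simp only
    rw [inner u hu]
    ring
  rw [intervalIntegral.integral_congr heq, intervalIntegral.integral_const_mul, part1 ξ hξ]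
  ring
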